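/- In Example 1's setting, v_P(y*_wc(N), N) = v_wc(N) for every P in the Fréchet class: with d̃_1 + d̃_2 = D almost surely and d̃_3 ~ U(0,D), y*_wc(N) = D(2p−c)/p, and for all P ∈ P(P_1,P_2), (p−c)·y*_wc(N) − p·E_P[(y*_wc(N) − D − d̃_3)⁺] = D(p−c)(3p−c)/(2p). -/

import Mathlib

open MeasureTheory

/-- Uniform distribution on `(0, D)`. -/
noncomputable def unif (D : ℝ) : Measure ℝ :=
  (ENNReal.ofReal D)⁻¹ • volume.restrict (Set.Ioo 0 D)

/-- Expected newsvendor profit of coalition `S ⊆ {1,2,3}` under joint law `μ`, order `y`. -/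
noncomputable def vP3 (p c : ℝ) (μ : Measure (Fin 3 → ℝ)) (y : ℝ) (S : Finset (Fin 3)) : ℝ :=
  (p - c) * y - p * ∫ d, max (y - ∑ i ∈ S, d i) 0 ∂μ

/-- Fréchet class for Example 1: `(d̃_1, d̃_2)` perfectly negatively correlated uniforms
summing to `D`, and `d̃_3 ~ U(0,D)`. -/
def frechet3 (D : ℝ) : Set (Measure (Fin 3 → ℝ)) :=
  {μ | IsProbabilityMeasure μ ∧
    μ.map (fun d => (d 0, d 1)) = (unif D).map (fun t => (t, D - t)) ∧
    μ.map (fun d => d 2) = unif D}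

lemma unif_integral_max (D a : ℝ) (hD : 0 < D) (ha : 0 < a) (haD : a < D) :
    ∫ t, max (a - t) 0 ∂(unif D) = a ^ 2 / (2 * D) := by
  have hcont : Continuous fun t : ℝ => max (a - t) 0 :=
    (continuous_const.sub continuous_id).max continuous_const
  have h1 : ∫ t, max (a - t) 0 ∂(unif D)
      = D⁻¹ • ∫ t in Set.Ioo 0 D, max (a - t) 0 := by
    rw [unif, integral_smul_measure, ENNReal.toReal_inv, ENNReal.toReal_ofReal hD.le]
  rw [h1]
  have h2 : ∫ t in Set.Ioo 0 D, max (a - t) 0 = ∫ t in (0:ℝ)..D, max (a - t) 0 := by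
    rw [intervalIntegral.integral_of_le hD.le, integral_Ioc_eq_integral_Ioo]
  rw [h2]
  have hint : ∀ x y : ℝ, IntervalIntegrable (fun t => max (a - t) 0) volume x y :=
    fun x y => hcont.intervalIntegrable x y
  have hsplit : ∫ t in (0:ℝ)..D, max (a - t) 0
      = (∫ t in (0:ℝ)..a, max (a - t) 0) + ∫ t in a..D, max (a - t) 0 :=
    (intervalIntegral.integral_add_adjacent_intervals (hint 0 a) (hint a D)).symm
  have hA : ∫ t in (0:ℝ)..a, max (a - t) 0 = a ^ 2 / 2 := by
    have he : ∫ t in (0:ℝ)..a, max (a - t) 0 = ∫ t in (0:ℝ)..a, (a - t) := by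
      apply intervalIntegral.integral_congr
      intro t ht
      rw [Set.uIcc_of_le ha.le] at ht
      exact max_eq_left (by linarith [ht.2])
    rw [he, intervalIntegral.integral_sub intervalIntegrable_const
      intervalIntegral.intervalIntegrable_id]
    simp
    ring
  have hB : ∫ t in a..D, max (a - t) 0 = 0 := by
    have he : ∫ t in a..D, max (a - t) 0 = ∫ t in a..D, (0:ℝ) := by
      apply intervalIntegral.integral_congr
      intro t ht
      rw [Set.uIcc_of_le haD.le] at ht
      exact max_eq_right (by linarith [ht.1])
    simp [he]
  rw [hsplit, hA, hB]
  field_simp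
  rw [smul_eq_mul, mul_comm D 2, mul_assoc 2 D, ← mul_assoc D, mul_one_div_cancel hD.ne']; ring

/-- In Example 1's setting, `v_P(y*_wc(N), N) = v_wc(N)` for every `P` in the Fréchet
class: with `y*_wc(N) = D(2p-c)/p`, for all `P ∈ P(P_1,P_2)`,
`(p-c)·y*_wc(N) - p·E_P[(y*_wc(N) - D - d̃_3)⁺] = D(p-c)(3p-c)/(2p)`. -/
theorem stmt_15 (p c D : ℝ) (hc : 0 < c) (hcp : c < p) (hD : 0 < D) :
    ∀ μ ∈ frechet3 D,
      vP3 p c μ (D * (2 * p - c) / p) Finset.univ = D * (p - c) * (3 * p - c) / (2 * p) ∧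
      (p - c) * (D * (2 * p - c) / p) -
          p * ∫ d, max (D * (2 * p - c) / p - D - d 2) 0 ∂μ =
        D * (p - c) * (3 * p - c) / (2 * p) := by
  intro μ ⟨hprob, h12, h3⟩
  have hp : (0:ℝ) < p := hc.trans hcp
  set y : ℝ := D * (2 * p - c) / p with hy
  set a : ℝ := D * (p - c) / p with ha
  have hyDa : y - D = a := by rw [hy, ha, eq_div_iff hp.ne', sub_mul, div_mul_cancel₀ _ hp.ne']; ring
  have ha0 : 0 < a := by
    rw [ha]
    apply div_pos _ hp
    nlinarith
  have haD : a < D := by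
    rw [ha, div_lt_iff₀ hp]
    nlinarith
  -- a.e. d 0 + d 1 = D
  have hg : Measurable fun d : Fin 3 → ℝ => (d 0, d 1) :=
    (measurable_pi_apply 0).prodMk (measurable_pi_apply 1)
  have hae : ∀ᵐ d ∂μ, d 0 + d 1 = D := by
    have hset : MeasurableSet {q : ℝ × ℝ | q.1 + q.2 ≠ D} :=
      ((measurable_fst.add measurable_snd) (measurableSet_singleton D)).compl
    have hz : μ {d | d 0 + d 1 ≠ D} = 0 := by
      have h1 : μ {d | d 0 + d 1 ≠ D}
          = μ.map (fun d => (d 0, d 1)) {q : ℝ × ℝ | q.1 + q.2 ≠ D} := by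
        rw [Measure.map_apply hg hset]; rfl
      rw [h1, h12,
        Measure.map_apply (f := fun t : ℝ => (t, D - t)) (by fun_prop) hset]
      have hpre : (fun t : ℝ => (t, D - t)) ⁻¹' {q : ℝ × ℝ | q.1 + q.2 ≠ D} = ∅ := by
        ext t; simp
      rw [hpre]; simp
    filter_upwards [measure_eq_zero_iff_ae_notMem.mp hz] with d hd
    simpa using hd
  -- the third-marginal integral
  have hcont : Continuous fun t : ℝ => max (a - t) 0 :=
    (continuous_const.sub continuous_id).max continuous_const
  have hI3 : ∫ d, max (a - d 2) 0 ∂μ = a ^ 2 / (2 * D) := by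
    have he : ∫ d, max (a - d 2) 0 ∂μ = ∫ t, max (a - t) 0 ∂(μ.map fun d => d 2) := by
      rw [integral_map (measurable_pi_apply 2).aemeasurable hcont.aestronglyMeasurable]
    rw [he, h3, unif_integral_max D a hD ha0 haD]
  -- rewrite full-sum integral
  have hIfull : ∫ d, max (y - ∑ i ∈ Finset.univ, d i) 0 ∂μ = a ^ 2 / (2 * D) := by
    rw [← hI3]
    apply integral_congr_ae
    filter_upwards [hae] with d hd
    rw [Fin.sum_univ_three]
    congr 1
    linarith [hyDa]
  constructor
  · rw [vP3, hIfull, hy]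
    rw [ha]; field_simp
    ring
  · have he : (fun d : Fin 3 → ℝ => max (D * (2 * p - c) / p - D - d 2) 0)
        = fun d => max (a - d 2) 0 := by
      funext d; rw [← hyDa]; try ring_nf
    rw [he, hI3, hy]
    rw [ha]; field_simp
    try ring
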